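/- Every ranked coalgebra is recursive: if (c_i : C_i → F(∐_{j<i} C_j))_{i∈I} is a ranked family for an endofunctor F on a category C with set-indexed coproducts, then the induced F-coalgebra on C = ∐_{i∈I} C_i, with structure c = [F(in_{<i}) ∘ c_i]_{i∈I}, is recursive. -/
import Mathlib


open CategoryTheory CategoryTheory.Limits

universe v u

/-- Every ranked coalgebra is recursive. Given a ranked family
`(c_i : C_i ⟶ F(∐_{j<i} C_j))` for an endofunctor `F` on a category with
set-indexed coproducts (`I` with a well-founded relation `r`), the induced
`F`-coalgebra on `∐_i C_i` with structure `c = [F(in_{<i}) ∘ c_i]_i` is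
recursive: for every `F`-algebra `(A, a)` there is a unique `h` with
`h = a ∘ F h ∘ c`. -/
theorem stmt_7 {C : Type u} [Category.{v} C] [HasCoproducts.{0} C]
    {I : Type} (r : I → I → Prop) (hwf : WellFounded r)
    (F : C ⥤ C) (Cf : I → C)
    (cf : ∀ i : I, Cf i ⟶ F.obj (∐ fun j : {j : I // r j i} => Cf j.1))
    (A : C) (a : F.obj A ⟶ A) :
    ∃! h : (∐ Cf) ⟶ A,
      h = (Sigma.desc fun i =>
            cf i ≫ F.map (Sigma.desc fun j : {j : I // r j i} => Sigma.ι Cf j.1))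
          ≫ F.map h ≫ a := by
  let g : ∀ i, Cf i ⟶ A := hwf.fix (fun i ih =>
    cf i ≫ F.map (Sigma.desc fun j : {j : I // r j i} => ih j.1 j.2) ≫ a)
  have hg : ∀ i, g i = cf i ≫ F.map (Sigma.desc fun j : {j : I // r j i} => g j.1) ≫ a :=
    fun i => hwf.fix_eq _ i
  have key : ∀ h' : (∐ Cf) ⟶ A,
      h' = (Sigma.desc fun i =>
            cf i ≫ F.map (Sigma.desc fun j : {j : I // r j i} => Sigma.ι Cf j.1))
          ≫ F.map h' ≫ a → ∀ i, Sigma.ι Cf i ≫ h' = g i := by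
    intro h' hh' i
    induction i using hwf.induction with
    | _ i ih =>
      conv_lhs => rw [hh']
      rw [hg i]
      simp only [colimit.ι_desc_assoc, Cofan.mk_ι_app, Category.assoc]
      have e : (Sigma.desc fun j : {j : I // r j i} => Sigma.ι Cf j.1) ≫ h'
          = Sigma.desc fun j : {j : I // r j i} => g j.1 := by
        ext j
        simp [ih j.1 j.2]
      rw [← Functor.map_comp_assoc, e]
  refine ⟨Sigma.desc g, ?_, ?_⟩
  · ext i
    rw [CategoryTheory.Limits.Sigma.ι_desc, hg i]
    simp only [colimit.ι_desc_assoc, Cofan.mk_ι_app, Category.assoc]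
    have e : (Sigma.desc fun j : {j : I // r j i} => Sigma.ι Cf j.1) ≫ Sigma.desc g
        = Sigma.desc fun j : {j : I // r j i} => g j.1 := by
      ext j
      simp
    rw [← Functor.map_comp_assoc, e]
  · intro h' hh'
    ext i
    rw [key h' hh' i, CategoryTheory.Limits.Sigma.ι_desc]
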